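/- Let N₁, N₂ be diagrams in ℕ^n and let α be greater than or equal to the largest vertex of both N₁ and N₂ (in the graded order). Then N₁ ≥ N₂ if and only if N₁(α) ≥ N₂(α), where N(α) = ℕ^n + {β ∈ N : β ≤ α}. -/
import Mathlib


/-- The key `(|α|, α₁, …, α_n)` of a multi-index, compared lexicographically. -/
def dlKey {n : ℕ} (a : Fin n →₀ ℕ) : ℕ ×ₗ Lex (Fin n →₀ ℕ) :=
  toLex ((∑ i, a i : ℕ), toLex a)

/-- Total-degree-then-lexicographic strict comparison `α < β` on multi-indices. -/
def degLexLt {n : ℕ} (a b : Fin n →₀ ℕ) : Prop := dlKey a < dlKey b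

/-- Total-degree-then-lexicographic comparison `α ≤ β` on multi-indices. -/
def degLexLe {n : ℕ} (a b : Fin n →₀ ℕ) : Prop := dlKey a ≤ dlKey b

/-- The translated cone `a + ℕ^n`. -/
def cone {n : ℕ} (a : Fin n →₀ ℕ) : Set (Fin n →₀ ℕ) :=
  {x | ∃ c : Fin n →₀ ℕ, x = a + c}

/-- `N(α) = ℕ^n + {β ∈ N : β ≤ α}`. -/
def diagAt {n : ℕ} (N : Set (Fin n →₀ ℕ)) (α : Fin n →₀ ℕ) : Set (Fin n →₀ ℕ) :=
  {x | ∃ b ∈ N, degLexLe b α ∧ ∃ c : Fin n →₀ ℕ, x = b + c}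

/-- `N^-(α) = ℕ^n + {β ∈ N : β < α}`. -/
def diagBelow {n : ℕ} (N : Set (Fin n →₀ ℕ)) (α : Fin n →₀ ℕ) : Set (Fin n →₀ ℕ) :=
  {x | ∃ b ∈ N, degLexLt b α ∧ ∃ c : Fin n →₀ ℕ, x = b + c}

/-- `v` is a vertex of the diagram `D`: an element of `D` not of the form `b + c` for any
other element `b` of `D` (i.e. a minimal generator). -/
def IsVertex {n : ℕ} (D : Set (Fin n →₀ ℕ)) (v : Fin n →₀ ℕ) : Prop :=
  v ∈ D ∧ ∀ b ∈ D, (∃ c : Fin n →₀ ℕ, v = b + c) → b = v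

/-- The increasing vertex list of a diagram, padded by `+∞` to an infinite sequence of
keys. -/
def padVert {n s : ℕ} (w : Fin s → (Fin n →₀ ℕ)) : ℕ → WithTop (ℕ ×ₗ Lex (Fin n →₀ ℕ)) :=
  fun j => if h : j < s then (WithTop.some (dlKey (w ⟨j, h⟩))) else ⊤

/-- The lexicographic comparison of diagrams via their increasing sequences of vertices,
with missing entries of the shorter list counted as `+∞`. -/
def DiagLexLt {n s₁ s₂ : ℕ} (w₁ : Fin s₁ → (Fin n →₀ ℕ)) (w₂ : Fin s₂ → (Fin n →₀ ℕ)) :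
    Prop :=
  ∃ j : ℕ, (∀ i < j, padVert w₁ i = padVert w₂ i) ∧ padVert w₁ j < padVert w₂ j


/-- Every element of a diagram lies in the cone over some vertex. -/
private lemma exists_vertex {n : ℕ} {N : Set (Fin n →₀ ℕ)}
    (hN : {x | ∃ a ∈ N, ∃ c : Fin n →₀ ℕ, x = a + c} = N)
    {x : Fin n →₀ ℕ} (hx : x ∈ N) :
    ∃ b, IsVertex N b ∧ ∃ c : Fin n →₀ ℕ, x = b + c := by
  set deg : (Fin n →₀ ℕ) → ℕ := fun a => ∑ i, a i with hdeg
  have hD : ∃ m, ∃ b ∈ N, (∃ c, x = b + c) ∧ deg b = m :=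
    ⟨deg x, x, hx, ⟨0, by simp⟩, rfl⟩
  obtain ⟨m, ⟨b, hbN, ⟨c, hc⟩, hdb⟩, hmin⟩ :=
    Nat.lt_wfRel.wf.has_min {m | ∃ b ∈ N, (∃ c, x = b + c) ∧ deg b = m} hD
  refine ⟨b, ⟨hbN, ?_⟩, c, hc⟩
  rintro b' hb' ⟨c', hc'⟩
  rcases eq_or_ne c' 0 with rfl | hc0
  · rw [hc', add_zero]
  · exfalso
    obtain ⟨i, hi⟩ := Finsupp.ne_iff.1 hc0
    have hci : 0 < c' i := Nat.pos_of_ne_zero (by simpa using hi)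
    have hsum : deg b = deg b' + deg c' := by
      simp [hdeg, hc', Finsupp.add_apply, Finset.sum_add_distrib]
    have hdc : 0 < deg c' :=
      lt_of_lt_of_le hci (Finset.single_le_sum (f := fun i => c' i)
        (fun i _ => Nat.zero_le _) (Finset.mem_univ i))
    have hlt : deg b' < m := by omega
    exact hmin (deg b') ⟨b', hb', ⟨c' + c, by rw [hc, hc', add_assoc]⟩, rfl⟩ hlt

private lemma diagAt_eq_self {n : ℕ} {N : Set (Fin n →₀ ℕ)}
    (hN : {x | ∃ a ∈ N, ∃ c : Fin n →₀ ℕ, x = a + c} = N) {α : Fin n →₀ ℕ}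
    (hver : ∀ v, IsVertex N v → degLexLe v α) :
    diagAt N α = N := by
  ext x
  constructor
  · rintro ⟨b, hb, -, c, rfl⟩
    rw [← hN]; exact ⟨b, hb, c, rfl⟩
  · intro hx
    obtain ⟨b, hbv, c, hxc⟩ := exists_vertex hN hx
    exact ⟨b, hbv.1, hver b hbv, c, hxc⟩

private lemma padVert_congr {n s t : ℕ} (f : Fin s → (Fin n →₀ ℕ)) (g : Fin t → (Fin n →₀ ℕ))
    (hf : StrictMono (fun i => dlKey (f i))) (hg : StrictMono (fun i => dlKey (g i)))
    (hr : Set.range f = Set.range g) :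
    padVert f = padVert g := by
  set F := fun i => dlKey (f i) with hFdef
  set G := fun i => dlKey (g i) with hGdef
  have hrFG : Set.range F = Set.range G := by
    have h1 : Set.range F = dlKey '' Set.range f := by
      exact (Set.range_comp dlKey f).trans rfl
    have h2 : Set.range G = dlKey '' Set.range g := by
      exact (Set.range_comp dlKey g).trans rfl
    rw [h1, h2, hr]
  set S : Finset (ℕ ×ₗ Lex (Fin n →₀ ℕ)) := Finset.univ.image F with hS
  have hcoe : (↑S : Set _) = Set.range F := by
    rw [hS, Finset.coe_image, Finset.coe_univ, Set.image_univ]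
  have hcard : S.card = s := by
    rw [hS, Finset.card_image_of_injective _ hf.injective, Finset.card_univ, Fintype.card_fin]
  have hcoe' : (↑S : Set _) = Set.range G := by rw [hcoe, hrFG]
  have hcard' : S.card = t := by
    have himg : (Finset.univ.image G) = S := Finset.coe_injective (by
      rw [Finset.coe_image, Finset.coe_univ, Set.image_univ, hcoe'])
    rw [← himg, Finset.card_image_of_injective _ hg.injective, Finset.card_univ,
      Fintype.card_fin]
  have hFe : F = S.orderEmbOfFin hcard :=
    Finset.orderEmbOfFin_unique hcard
      (fun x => by rw [← Finset.mem_coe, hcoe]; exact ⟨x, rfl⟩) hf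
  have hGe : G = S.orderEmbOfFin hcard' :=
    Finset.orderEmbOfFin_unique hcard'
      (fun x => by rw [← Finset.mem_coe, hcoe']; exact ⟨x, rfl⟩) hg
  have hst : s = t := by rw [← hcard, hcard']
  subst hst
  funext j
  unfold padVert
  by_cases h : j < s
  · simp only [dif_pos h]
    have heq : F ⟨j, h⟩ = G ⟨j, h⟩ := by rw [hFe, hGe]
    exact congrArg _ heq
  · simp only [dif_neg h]

/-- Let `N₁, N₂` be diagrams in `ℕ^n` (with increasing vertex
enumerations `v₁`, `v₂`) and let `α` be greater than or equal to every vertex of both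
`N₁` and `N₂` (in the graded order).  Then `N₁ ≥ N₂` if and only if `N₁(α) ≥ N₂(α)`,
where `N(α) = ℕ^n + {β ∈ N : β ≤ α}` (with increasing vertex enumerations `w₁`, `w₂`),
diagrams being compared by the lexicographic order on their vertex lists. -/
theorem statement15 {n : ℕ} (N₁ N₂ : Set (Fin n →₀ ℕ))
    (hN₁ : {x | ∃ a ∈ N₁, ∃ c : Fin n →₀ ℕ, x = a + c} = N₁)
    (hN₂ : {x | ∃ a ∈ N₂, ∃ c : Fin n →₀ ℕ, x = a + c} = N₂)
    (α : Fin n →₀ ℕ) {t₁ t₂ s₁ s₂ : ℕ}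
    (v₁ : Fin t₁ → (Fin n →₀ ℕ)) (v₂ : Fin t₂ → (Fin n →₀ ℕ))
    (w₁ : Fin s₁ → (Fin n →₀ ℕ)) (w₂ : Fin s₂ → (Fin n →₀ ℕ))
    (hv₁mono : ∀ i j : Fin t₁, i < j → degLexLt (v₁ i) (v₁ j))
    (hv₂mono : ∀ i j : Fin t₂, i < j → degLexLt (v₂ i) (v₂ j))
    (hw₁mono : ∀ i j : Fin s₁, i < j → degLexLt (w₁ i) (w₁ j))
    (hw₂mono : ∀ i j : Fin s₂, i < j → degLexLt (w₂ i) (w₂ j))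
    (hv₁ : ∀ v, IsVertex N₁ v ↔ ∃ i, v₁ i = v)
    (hv₂ : ∀ v, IsVertex N₂ v ↔ ∃ i, v₂ i = v)
    (hw₁ : ∀ v, IsVertex (diagAt N₁ α) v ↔ ∃ i, w₁ i = v)
    (hw₂ : ∀ v, IsVertex (diagAt N₂ α) v ↔ ∃ i, w₂ i = v)
    (hα₁ : ∀ i, degLexLe (v₁ i) α) (hα₂ : ∀ i, degLexLe (v₂ i) α) :
    ¬ DiagLexLt v₁ v₂ ↔ ¬ DiagLexLt w₁ w₂ := by
  have hver₁ : ∀ v, IsVertex N₁ v → degLexLe v α := fun v hv => by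
    obtain ⟨i, rfl⟩ := (hv₁ v).1 hv; exact hα₁ i
  have hver₂ : ∀ v, IsVertex N₂ v → degLexLe v α := fun v hv => by
    obtain ⟨i, rfl⟩ := (hv₂ v).1 hv; exact hα₂ i
  have h1 : diagAt N₁ α = N₁ := diagAt_eq_self hN₁ hver₁
  have h2 : diagAt N₂ α = N₂ := diagAt_eq_self hN₂ hver₂
  have hr1 : Set.range w₁ = Set.range v₁ := by
    ext v
    simp only [Set.mem_range]
    rw [← hw₁ v, h1, hv₁ v]
  have hr2 : Set.range w₂ = Set.range v₂ := by
    ext v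
    simp only [Set.mem_range]
    rw [← hw₂ v, h2, hv₂ v]
  have p1 : padVert w₁ = padVert v₁ :=
    padVert_congr w₁ v₁ (fun i j h => hw₁mono i j h) (fun i j h => hv₁mono i j h) hr1
  have p2 : padVert w₂ = padVert v₂ :=
    padVert_congr w₂ v₂ (fun i j h => hw₂mono i j h) (fun i j h => hv₂mono i j h) hr2
  exact not_congr (by unfold DiagLexLt; rw [p1, p2])
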